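/- Two extended Cartesian trees that give the same answer to every range top-2 query RT2Q(i,j) are equal; that is, if T and T' have the same topology and for some node v the merge orders M(v) and M'(v) differ, then there exist indices i < j such that the second-minimum answers determined by T and T' differ. -/

import Mathlib

inductive BT where
  | leaf : BT
  | node : BT → BT → BT
deriving DecidableEq

namespace BT

/-- Number of nodes. -/
def size : BT → ℕ
  | leaf => 0
  | node l r => l.size + r.size + 1

/-- Inorder list of node positions (paths from the root; `false` = left step). -/
def inList : BT → List (List Bool)
  | leaf => []
  | node l r => (l.inList).map (List.cons false) ++ [] :: (r.inList).map (List.cons true)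

/-- Preorder list of node positions. -/
def preList : BT → List (List Bool)
  | leaf => []
  | node l r => [] :: ((l.preList).map (List.cons false) ++ (r.preList).map (List.cons true))

/-- Subtree rooted at a given position, if the position is valid. -/
def subtree? : BT → List Bool → Option BT
  | t, [] => some t
  | leaf, _ :: _ => none
  | node l r, b :: p => if b then r.subtree? p else l.subtree? p

/-- Size of the left spine (maximal path following left children, top node included). -/
def Lspine : BT → ℕ
  | leaf => 0
  | node l _ => l.Lspine + 1

/-- Size of the right spine. -/
def Rspine : BT → ℕ
  | leaf => 0
  | node _ r => r.Rspine + 1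

/-- Size of the left inner spine of the root: right spine of the left child. -/
def lv : BT → ℕ
  | leaf => 0
  | node l _ => l.Rspine

/-- Size of the right inner spine of the root: left spine of the right child. -/
def rv : BT → ℕ
  | leaf => 0
  | node _ r => r.Lspine

/-- Sum of `f` over all (sub)trees rooted at nodes of the tree. -/
def sumNodes (f : BT → ℕ) : BT → ℕ
  | leaf => 0
  | node l r => f (node l r) + sumNodes f l + sumNodes f r

/-- Number of leaf nodes (nodes with no children). -/
def leaves : BT → ℕ
  | leaf => 0
  | node leaf leaf => 1
  | node l r => leaves l + leaves r

end BT

/-- Longest common prefix of two paths: the LCA of two positions in a binary tree. -/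
def lcp : List Bool → List Bool → List Bool
  | a :: p, b :: q => if a = b then a :: lcp p q else []
  | _, _ => []

/-- Index of the minimum element of a list (0 if empty). -/
def minIdx {α : Type*} [LinearOrder α] (l : List α) : ℕ :=
  match l.argmin id with
  | none => 0
  | some a => l.idxOf a

/-- Cartesian tree construction with fuel. -/
def cartesianAux {α : Type*} [LinearOrder α] : ℕ → List α → BT
  | 0, _ => .leaf
  | _ + 1, [] => .leaf
  | n + 1, l@(_ :: _) =>
      .node (cartesianAux n (l.take (minIdx l))) (cartesianAux n (l.drop (minIdx l + 1)))

/-- The Cartesian tree of a list: root at the position of the minimum,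
recursively built on the prefix before and the suffix after the minimum. -/
def cartesian {α : Type*} [LinearOrder α] (l : List α) : BT :=
  cartesianAux l.length l

/-- `k` is the position of the minimum of `A` on the range `[i, j]`. -/
def isArgmin {α : Type*} [LinearOrder α] {n : ℕ} (A : Fin n → α) (i j k : Fin n) : Prop :=
  i ≤ k ∧ k ≤ j ∧ ∀ m, i ≤ m → m ≤ j → A k ≤ A m

/-- `k` is the position of the second smallest element of `A` on the range `[i, j]`. -/
def isSecondMin {α : Type*} [LinearOrder α] {n : ℕ} (A : Fin n → α) (i j k : Fin n) : Prop :=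
  i ≤ k ∧ k ≤ j ∧
    ∃ m, isArgmin A i j m ∧ k ≠ m ∧ ∀ l, i ≤ l → l ≤ j → l ≠ m → A k ≤ A l

/-- The node with inorder number `i` in `t` has a left child. -/
def hasLeftChildAt (t : BT) (i : ℕ) : Prop :=
  ∃ (p : List Bool) (ll lr r : BT),
    t.inList[i]? = some p ∧ t.subtree? p = some (.node (.node ll lr) r)

/-- Index of the `k`-th (0-indexed) occurrence of `b` in `w` (`w.length` if none). -/
def nthIdx (w : List Bool) (b : Bool) (k : ℕ) : ℕ :=
  ((List.range w.length).filter fun i => w.getD i (!b) = b).getD k w.length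

/-- `M` assigns to each two-child node of `t` a valid merge word of its inner spines:
a word of length `l_v + r_v` with exactly `r_v` occurrences of `true`. -/
def validMerge (t : BT) (M : List Bool → List Bool) : Prop :=
  ∀ p l r, t.subtree? p = some (.node l r) → l ≠ .leaf → r ≠ .leaf →
    (M p).length = l.Rspine + r.Lspine ∧ (M p).count true = r.Lspine

/-- The array `A` realizes the extended Cartesian tree `(t, M)`: its Cartesian tree is `t`
and, at every two-child node, the relative order of the values on the two inner spines
agrees with the merge word (which lists, in increasing value order, `false` for an element
of the left inner spine and `true` for one of the right inner spine). -/
def realizes {α : Type*} [LinearOrder α] {n : ℕ} (A : Fin n → α) (t : BT)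
    (M : List Bool → List Bool) : Prop :=
  cartesian (List.ofFn A) = t ∧
  ∀ p l r, t.subtree? p = some (.node l r) → l ≠ .leaf → r ≠ .leaf →
    ∀ (k k' : ℕ), k < l.Rspine → k' < r.Lspine →
      ∀ x y : Fin n,
        t.inList[(x : ℕ)]? = some (p ++ false :: List.replicate k true) →
        t.inList[(y : ℕ)]? = some (p ++ true :: List.replicate k' false) →
        (A x < A y ↔ nthIdx (M p) false k < nthIdx (M p) true k')

namespace BT

lemma length_inList (t : BT) : t.inList.length = t.size := by
  induction t with
  | leaf => simp [inList, size]
  | node l r ihl ihr => simp [inList, size, ihl, ihr]; omega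

lemma inList_node (l r : BT) :
    (node l r).inList =
      l.inList.map (List.cons false) ++ [] :: r.inList.map (List.cons true) := rfl

lemma getElem?_inList_node {l r : BT} {i : ℕ} {p : List Bool}
    (h : (node l r).inList[i]? = some p) :
    (i < l.inList.length ∧ ∃ q, p = false :: q ∧ l.inList[i]? = some q) ∨
    (i = l.inList.length ∧ p = []) ∨
    (l.inList.length < i ∧ ∃ q, p = true :: q ∧
      r.inList[i - l.inList.length - 1]? = some q) := by
  rw [inList_node, List.getElem?_append] at h
  split at h
  · rename_i hlt
    rw [List.getElem?_map] at h
    simp only [List.length_map] at hlt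
    obtain ⟨q, hq, hq'⟩ := Option.map_eq_some_iff.mp h
    exact Or.inl ⟨hlt, q, hq'.symm, hq⟩
  · rename_i hge
    simp only [List.length_map, not_lt] at hge
    rcases Nat.eq_or_lt_of_le hge with heq | hlt
    · right; left
      have : i - (l.inList.map (List.cons false)).length = 0 := by
        simp [List.length_map]; omega
      rw [this] at h
      simp only [List.getElem?_cons_zero] at h
      exact ⟨heq.symm, (Option.some_injective _ h).symm⟩
    · right; right
      have h1 : i - (l.inList.map (List.cons false)).length
          = (i - l.inList.length - 1) + 1 := by simp [List.length_map]; omega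
      rw [h1, List.getElem?_cons_succ, List.getElem?_map] at h
      obtain ⟨q, hq, hq'⟩ := Option.map_eq_some_iff.mp h
      exact ⟨hlt, q, hq'.symm, hq⟩

lemma inList_node_left {l r : BT} {i : ℕ} {q : List Bool}
    (h : l.inList[i]? = some q) :
    (node l r).inList[i]? = some (false :: q) := by
  have hi : i < l.inList.length := (List.getElem?_eq_some_iff.mp h).1
  rw [inList_node, List.getElem?_append, if_pos (by simpa using hi), List.getElem?_map, h]
  rfl

lemma inList_node_mid (l r : BT) :
    (node l r).inList[l.inList.length]? = some [] := by
  rw [inList_node, List.getElem?_append_right (by simp)]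
  simp

lemma inList_node_right {l r : BT} {i : ℕ} {q : List Bool}
    (h : r.inList[i]? = some q) :
    (node l r).inList[l.inList.length + 1 + i]? = some (true :: q) := by
  rw [inList_node, List.getElem?_append_right (by simp; omega)]
  have : l.inList.length + 1 + i - (l.inList.map (List.cons false)).length = i + 1 := by
    simp; omega
  rw [this, List.getElem?_cons_succ, List.getElem?_map, h]
  rfl

lemma nodup_inList (t : BT) : t.inList.Nodup := by
  induction t with
  | leaf => simp [inList]
  | node l r ihl ihr =>
    rw [inList_node]
    refine List.Nodup.append (ihl.map ?_) (List.nodup_cons.mpr ⟨by simp, ihr.map ?_⟩) ?_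
    · intro a b hab; simpa using hab
    · intro a b hab; simpa using hab
    · intro q hq hq'
      obtain ⟨q1, _, rfl⟩ := List.mem_map.mp hq
      rcases List.mem_cons.mp hq' with h | h
      · simp at h
      · obtain ⟨q2, _, he⟩ := List.mem_map.mp h
        simp at he

lemma subtree?_append (t : BT) (a b : List Bool) :
    t.subtree? (a ++ b) = (t.subtree? a).bind (fun s => s.subtree? b) := by
  induction a generalizing t with
  | nil => simp [subtree?]
  | cons x a ih =>
    cases t with
    | leaf => simp [subtree?]
    | node l r => cases x <;> simp [subtree?, ih]

lemma mem_inList_of_subtree? {t : BT} {q : List Bool} {a b : BT}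
    (h : t.subtree? q = some (node a b)) : q ∈ t.inList := by
  induction q generalizing t with
  | nil =>
    rw [subtree?] at h
    obtain rfl := Option.some_injective _ h
    rw [inList_node]
    exact List.mem_append.mpr (Or.inr List.mem_cons_self)
  | cons x q ih =>
    cases t with
    | leaf => simp [subtree?] at h
    | node l r =>
      cases x
      · simp only [subtree?, if_neg Bool.false_ne_true] at h
        exact List.mem_append.mpr (Or.inl (List.mem_map_of_mem (ih h)))
      · simp only [subtree?, if_pos rfl] at h
        exact List.mem_append.mpr
          (Or.inr (List.mem_cons.mpr (Or.inr (List.mem_map_of_mem (ih h)))))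

lemma subtree?_of_mem_inList {t : BT} {q : List Bool} (h : q ∈ t.inList) :
    ∃ a b, t.subtree? q = some (node a b) := by
  induction t generalizing q with
  | leaf => simp [inList] at h
  | node l r ihl ihr =>
    rw [inList_node] at h
    rcases List.mem_append.mp h with h | h
    · obtain ⟨q', hq', rfl⟩ := List.mem_map.mp h
      obtain ⟨a, b, hab⟩ := ihl hq'
      exact ⟨a, b, by simpa [subtree?] using hab⟩
    · rcases List.mem_cons.mp h with rfl | h
      · exact ⟨l, r, rfl⟩
      · obtain ⟨q', hq', rfl⟩ := List.mem_map.mp h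
        obtain ⟨a, b, hab⟩ := ihr hq'
        exact ⟨a, b, by simpa [subtree?] using hab⟩

lemma subtree?_replicate_true {t : BT} {k : ℕ} (h : k < t.Rspine) :
    ∃ a b, t.subtree? (List.replicate k true) = some (node a b) := by
  induction k generalizing t with
  | zero =>
    cases t with
    | leaf => simp [Rspine] at h
    | node l r => exact ⟨l, r, rfl⟩
  | succ k ih =>
    cases t with
    | leaf => simp [Rspine] at h
    | node l r =>
      rw [Rspine] at h
      obtain ⟨a, b, hab⟩ := ih (t := r) (by omega)
      exact ⟨a, b, by simpa [List.replicate_succ, subtree?] using hab⟩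

lemma subtree?_replicate_false {t : BT} {k : ℕ} (h : k < t.Lspine) :
    ∃ a b, t.subtree? (List.replicate k false) = some (node a b) := by
  induction k generalizing t with
  | zero =>
    cases t with
    | leaf => simp [Lspine] at h
    | node l r => exact ⟨l, r, rfl⟩
  | succ k ih =>
    cases t with
    | leaf => simp [Lspine] at h
    | node l r =>
      rw [Lspine] at h
      obtain ⟨a, b, hab⟩ := ih (t := l) (by omega)
      exact ⟨a, b, by simpa [List.replicate_succ, subtree?] using hab⟩

end BT

namespace BT

lemma loc : ∀ (c : List Bool) {t s : BT}, t.subtree? c = some s →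
    ∃ δ : ℕ, ∀ (u : List Bool) (i : ℕ),
      t.inList[i]? = some (c ++ u) ↔ ∃ i', i = δ + i' ∧ s.inList[i']? = some u := by
  intro c
  induction c with
  | nil =>
    intro t s h
    rw [subtree?] at h
    obtain rfl := Option.some_injective _ h
    exact ⟨0, fun u i => by simp⟩
  | cons x c ih =>
    intro t s h
    cases t with
    | leaf => simp [subtree?] at h
    | node l r =>
      cases x with
      | false =>
        simp only [subtree?, if_neg Bool.false_ne_true] at h
        obtain ⟨δ, hδ⟩ := ih h
        refine ⟨δ, fun u i => ⟨fun hi => ?_, fun hi => ?_⟩⟩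
        · rcases getElem?_inList_node hi with ⟨_, q, hq, hq'⟩ | ⟨_, h0⟩ | ⟨_, q, hq, _⟩
          · rw [List.cons_append] at hq
            obtain rfl : c ++ u = q := by injection hq
            exact (hδ u i).mp hq'
          · simp at h0
          · rw [List.cons_append] at hq; injection hq; simp_all
        · obtain ⟨i', rfl, hi'⟩ := hi
          have := inList_node_left (r := r) ((hδ u (δ + i')).mpr ⟨i', rfl, hi'⟩)
          simpa using this
      | true =>
        simp only [subtree?, if_pos rfl] at h
        obtain ⟨δ, hδ⟩ := ih h
        refine ⟨l.inList.length + 1 + δ, fun u i => ⟨fun hi => ?_, fun hi => ?_⟩⟩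
        · rcases getElem?_inList_node hi with ⟨_, q, hq, _⟩ | ⟨_, h0⟩ | ⟨hgt, q, hq, hq'⟩
          · rw [List.cons_append] at hq; injection hq; simp_all
          · simp at h0
          · rw [List.cons_append] at hq
            obtain rfl : c ++ u = q := by injection hq
            obtain ⟨i', hi', hii⟩ := (hδ u _).mp hq'
            exact ⟨i', by omega, hii⟩
        · obtain ⟨i', rfl, hi'⟩ := hi
          have := inList_node_right (l := l) ((hδ u (δ + i')).mpr ⟨i', rfl, hi'⟩)
          rw [show l.inList.length + 1 + (δ + i') = l.inList.length + 1 + δ + i' by omega] at this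
          simpa using this

lemma lt_of_left_branch {t : BT} {c u v : List Bool} {x y : ℕ}
    (hx : t.inList[x]? = some (c ++ false :: u))
    (hy : t.inList[y]? = some (c ++ v))
    (hv : v = [] ∨ ∃ w, v = true :: w) : x < y := by
  have hmem : (c ++ false :: u) ∈ t.inList := List.mem_of_getElem? hx
  obtain ⟨a, b, hab⟩ := subtree?_of_mem_inList hmem
  rw [subtree?_append] at hab
  obtain ⟨s, hs⟩ : ∃ s, t.subtree? c = some s := by
    cases h : t.subtree? c with
    | none => rw [h] at hab; simp at hab
    | some s => exact ⟨s, rfl⟩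
  obtain ⟨δ, hδ⟩ := loc c hs
  obtain ⟨x', rfl, hx'⟩ := (hδ _ _).mp hx
  obtain ⟨y', rfl, hy'⟩ := (hδ _ _).mp hy
  cases s with
  | leaf => simp [inList] at hx'
  | node ls rs =>
    have hx'' : x' < ls.inList.length := by
      rcases getElem?_inList_node hx' with ⟨hlt, q, hq, _⟩ | ⟨_, h0⟩ | ⟨_, q, hq, _⟩
      · exact hlt
      · simp at h0
      · simp at hq
    have hy'' : ls.inList.length ≤ y' := by
      rcases hv with rfl | ⟨w, rfl⟩
      · rcases getElem?_inList_node hy' with ⟨_, q, hq, _⟩ | ⟨heq, _⟩ | ⟨hgt, q, hq, _⟩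
        · simp at hq
        · omega
        · omega
      · rcases getElem?_inList_node hy' with ⟨_, q, hq, _⟩ | ⟨_, h0⟩ | ⟨hgt, q, hq, _⟩
        · simp at hq
        · simp at h0
        · omega
    omega

lemma lt_of_right_branch {t : BT} {c v : List Bool} {x y : ℕ}
    (hx : t.inList[x]? = some c)
    (hy : t.inList[y]? = some (c ++ true :: v)) : x < y := by
  have hmem : (c ++ true :: v) ∈ t.inList := List.mem_of_getElem? hy
  obtain ⟨a, b, hab⟩ := subtree?_of_mem_inList hmem
  rw [subtree?_append] at hab
  obtain ⟨s, hs⟩ : ∃ s, t.subtree? c = some s := by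
    cases h : t.subtree? c with
    | none => rw [h] at hab; simp at hab
    | some s => exact ⟨s, rfl⟩
  obtain ⟨δ, hδ⟩ := loc c hs
  have hx0 : t.inList[x]? = some (c ++ []) := by simpa using hx
  obtain ⟨x', rfl, hx'⟩ := (hδ _ _).mp hx0
  obtain ⟨y', rfl, hy'⟩ := (hδ _ _).mp hy
  cases s with
  | leaf => simp [inList] at hy'
  | node ls rs =>
    have hx'' : x' = ls.inList.length := by
      rcases getElem?_inList_node hx' with ⟨_, q, hq, _⟩ | ⟨heq, _⟩ | ⟨_, q, hq, _⟩
      · simp at hq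
      · omega
      · simp at hq
    have hy'' : ls.inList.length < y' := by
      rcases getElem?_inList_node hy' with ⟨_, q, hq, _⟩ | ⟨_, h0⟩ | ⟨hgt, q, hq, _⟩
      · simp at hq
      · simp at h0
      · omega
    omega

lemma spine_right : ∀ (k : ℕ) {t : BT} {x z : ℕ} {pz : List Bool},
    t.inList[x]? = some (List.replicate k true) → t.inList[z]? = some pz →
    x ≤ z → List.replicate k true <+: pz := by
  intro k
  induction k with
  | zero => intro t x z pz _ _ _; simp
  | succ k ih =>
    intro t x z pz hx hz hxz
    cases t with
    | leaf => simp [inList] at hx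
    | node l r =>
      rw [List.replicate_succ] at hx
      rcases getElem?_inList_node hx with ⟨_, q, hq, _⟩ | ⟨_, h0⟩ | ⟨hgt, q, hq, hx'⟩
      · simp at hq
      · simp at h0
      · obtain rfl : List.replicate k true = q := by injection hq
        rcases getElem?_inList_node hz with ⟨hlt, _, _, _⟩ | ⟨heq, _⟩ | ⟨hgt', q', hq', hz'⟩
        · omega
        · omega
        · subst hq'
          rw [List.replicate_succ]
          exact List.cons_prefix_cons.mpr ⟨rfl, ih hx' hz' (by omega)⟩

lemma spine_left : ∀ (k : ℕ) {t : BT} {x z : ℕ} {pz : List Bool},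
    t.inList[x]? = some (List.replicate k false) → t.inList[z]? = some pz →
    z ≤ x → List.replicate k false <+: pz := by
  intro k
  induction k with
  | zero => intro t x z pz _ _ _; simp
  | succ k ih =>
    intro t x z pz hx hz hxz
    cases t with
    | leaf => simp [inList] at hx
    | node l r =>
      rw [List.replicate_succ] at hx
      rcases getElem?_inList_node hx with ⟨hlt, q, hq, hx'⟩ | ⟨_, h0⟩ | ⟨_, q, hq, _⟩
      · obtain rfl : List.replicate k false = q := by injection hq
        rcases getElem?_inList_node hz with ⟨hlt', q', hq', hz'⟩ | ⟨heq, _⟩ | ⟨hgt', _, _, _⟩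
        · subst hq'
          rw [List.replicate_succ]
          exact List.cons_prefix_cons.mpr ⟨rfl, ih hx' hz' hxz⟩
        · omega
        · omega
      · simp at h0
      · simp at hq

end BT

lemma bool_tri : ∀ (p q : List Bool), p <+: q ∨ q <+: p ∨
    ∃ c a u v, p = c ++ a :: u ∧ q = c ++ (!a) :: v := by
  intro p
  induction p with
  | nil => intro q; exact Or.inl (List.nil_prefix)
  | cons x p ih =>
    intro q
    cases q with
    | nil => exact Or.inr (Or.inl List.nil_prefix)
    | cons y q =>
      by_cases hxy : x = y
      · subst hxy
        rcases ih q with h | h | ⟨c, a, u, v, rfl, rfl⟩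
        · exact Or.inl (List.cons_prefix_cons.mpr ⟨rfl, h⟩)
        · exact Or.inr (Or.inl (List.cons_prefix_cons.mpr ⟨rfl, h⟩))
        · exact Or.inr (Or.inr ⟨x :: c, a, u, v, rfl, rfl⟩)
      · refine Or.inr (Or.inr ⟨[], x, p, q, rfl, ?_⟩)
        have : y = !x := by cases x <;> cases y <;> simp_all
        rw [this]; rfl

section Cartesian
variable {α : Type*} [LinearOrder α]

lemma minIdx_spec {l : List α} (h : l ≠ []) :
    ∃ a, l[minIdx l]? = some a ∧ ∀ b ∈ l, a ≤ b := by
  rw [minIdx]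
  cases ha : l.argmin id with
  | none => exact absurd (List.argmin_eq_none.mp ha) h
  | some a =>
    exact ⟨a, List.getElem?_idxOf (List.argmin_mem ha),
      fun b hb => List.le_of_mem_argmin hb ha⟩

lemma minIdx_lt_length {l : List α} (h : l ≠ []) : minIdx l < l.length := by
  obtain ⟨a, ha, _⟩ := minIdx_spec h
  exact (List.getElem?_eq_some_iff.mp ha).1

lemma cartesianAux_congr : ∀ (f1 f2 : ℕ) (l : List α), l.length ≤ f1 → l.length ≤ f2 →
    cartesianAux f1 l = cartesianAux f2 l := by
  intro f1
  induction f1 with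
  | zero =>
    intro f2 l h1 _
    obtain rfl : l = [] := List.length_eq_zero_iff.mp (by omega)
    cases f2 <;> rfl
  | succ f1 ih =>
    intro f2 l h1 h2
    cases l with
    | nil => cases f2 <;> rfl
    | cons x xs =>
      cases f2 with
      | zero => simp at h2
      | succ f2 =>
        have hm : minIdx (x :: xs) < (x :: xs).length := minIdx_lt_length (by simp)
        have hlc : (x :: xs).length = xs.length + 1 := by simp
        rw [cartesianAux, cartesianAux]
        have l1 : ((x :: xs).take (minIdx (x :: xs))).length ≤ f1 := by
          rw [List.length_take]; omega
        have l2 : ((x :: xs).take (minIdx (x :: xs))).length ≤ f2 := by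
          rw [List.length_take]; omega
        have l3 : ((x :: xs).drop (minIdx (x :: xs) + 1)).length ≤ f1 := by
          rw [List.length_drop]; omega
        have l4 : ((x :: xs).drop (minIdx (x :: xs) + 1)).length ≤ f2 := by
          rw [List.length_drop]; omega
        rw [ih f2 _ l1 l2, ih f2 _ l3 l4]

lemma cartesian_eq_node {l : List α} (h : l ≠ []) :
    cartesian l = .node (cartesian (l.take (minIdx l))) (cartesian (l.drop (minIdx l + 1))) := by
  have hm : minIdx l < l.length := minIdx_lt_length h
  obtain ⟨x, xs, rfl⟩ := List.exists_cons_of_ne_nil h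
  have hlc : (x :: xs).length = xs.length + 1 := by simp
  rw [cartesian, List.length_cons, cartesianAux]
  rw [cartesian, cartesian]
  congr 1
  · exact cartesianAux_congr _ _ _ (by rw [List.length_take]; omega) le_rfl
  · exact cartesianAux_congr _ _ _ (by rw [List.length_drop]; omega) le_rfl

lemma size_cartesian : ∀ (N : ℕ) (l : List α), l.length ≤ N → (cartesian l).size = l.length := by
  intro N
  induction N with
  | zero =>
    intro l h
    obtain rfl : l = [] := List.length_eq_zero_iff.mp (by omega)
    rfl
  | succ N ih =>
    intro l h
    rcases eq_or_ne l [] with rfl | hne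
    · rfl
    · have hm : minIdx l < l.length := minIdx_lt_length hne
      rw [cartesian_eq_node hne, BT.size]
      rw [ih _ (by rw [List.length_take]; omega), ih _ (by rw [List.length_drop]; omega)]
      rw [List.length_take, List.length_drop]
      omega

lemma length_inList_cartesian (l : List α) : (cartesian l).inList.length = l.length := by
  rw [BT.length_inList, size_cartesian l.length l le_rfl]

lemma cartesian_strict : ∀ (N : ℕ) (l : List α), l.length ≤ N → l.Nodup →
    ∀ (i j : ℕ) (pi pj : List Bool), (cartesian l).inList[i]? = some pi →
      (cartesian l).inList[j]? = some pj → pi <+: pj → pi ≠ pj →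
      ∃ a b, l[i]? = some a ∧ l[j]? = some b ∧ a < b := by
  intro N
  induction N with
  | zero =>
    intro l h _ i j pi pj hi _ _ _
    obtain rfl : l = [] := List.length_eq_zero_iff.mp (by omega)
    simp [cartesian, cartesianAux, BT.inList] at hi
  | succ N ih =>
    intro l h hnd i j pi pj hi hj hpre hne
    rcases eq_or_ne l [] with rfl | hlne
    · simp [cartesian, cartesianAux, BT.inList] at hi
    set m := minIdx l with hmdef
    have hm : m < l.length := minIdx_lt_length hlne
    rw [cartesian_eq_node hlne] at hi hj
    rw [← hmdef] at hi hj
    have hLlen : (cartesian (l.take m)).inList.length = m := by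
      rw [length_inList_cartesian, List.length_take]; omega
    have hRlen : (cartesian (l.drop (m + 1))).inList.length = l.length - m - 1 := by
      rw [length_inList_cartesian, List.length_drop]
      omega
    rcases BT.getElem?_inList_node hi with ⟨hilt, qi, rfl, hi'⟩ | ⟨hieq, rfl⟩ | ⟨higt, qi, rfl, hi'⟩
    · -- i in left subtree, pi = false :: qi
      obtain ⟨tl, rfl⟩ := hpre
      rcases BT.getElem?_inList_node hj with ⟨hjlt, qj, hqj, hj'⟩ | ⟨_, h0⟩ | ⟨_, qj, hqj, _⟩
      · obtain rfl : qi ++ tl = qj := by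
          rw [List.cons_append] at hqj; injection hqj
        have hqine : qi ≠ qi ++ tl := by
          intro hq; apply hne; rw [List.cons_append]; exact congrArg _ hq
        obtain ⟨a, b, ha, hb, hab⟩ := ih (l.take m)
          (by rw [List.length_take]; omega)
          (hnd.sublist (List.take_sublist m l)) i j qi (qi ++ tl) hi' hj'
          ⟨tl, rfl⟩ hqine
        rw [List.getElem?_take, if_pos (by omega)] at ha
        rw [List.getElem?_take, if_pos (by omega)] at hb
        exact ⟨a, b, ha, hb, hab⟩
      · rw [List.cons_append] at h0; simp at h0
      · rw [List.cons_append] at hqj; simp at hqj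
    · -- i is the root, pi = []
      rw [hLlen] at hieq
      obtain ⟨amin, hamin, hmin⟩ := minIdx_spec hlne
      have hjlen : j < l.length := by
        rcases BT.getElem?_inList_node hj with ⟨hjlt, _, _, _⟩ | ⟨_, h0⟩ | ⟨hjgt, qj, hqj, hj'⟩
        · omega
        · exact absurd h0.symm hne
        · have := (List.getElem?_eq_some_iff.mp hj').1
          rw [hRlen] at this
          rw [hLlen] at hjgt
          omega
      have hij : i ≠ j := by
        intro hij
        apply hne
        rw [hij] at hi
        rw [hi] at hj
        exact (Option.some_injective _ hj).symm ▸ rfl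
      have hj2 : l[j]? = some l[j] := List.getElem?_eq_getElem hjlen
      refine ⟨amin, l[j], by rw [hieq, hmdef]; exact hamin, hj2, ?_⟩
      have hle : amin ≤ l[j] := hmin _ (l.getElem_mem _)
      rcases lt_or_eq_of_le hle with h | h
      · exact h
      · exfalso
        apply hij
        apply (List.getElem?_inj (by omega : i < l.length) hnd).mp
        rw [hj2, hieq, hmdef, hamin, h]
    · -- i in right subtree, pi = true :: qi
      obtain ⟨tl, rfl⟩ := hpre
      rcases BT.getElem?_inList_node hj with ⟨_, qj, hqj, _⟩ | ⟨_, h0⟩ | ⟨hjgt, qj, hqj, hj'⟩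
      · rw [List.cons_append] at hqj; simp at hqj
      · rw [List.cons_append] at h0; simp at h0
      · obtain rfl : qi ++ tl = qj := by
          rw [List.cons_append] at hqj; injection hqj
        have hqine : qi ≠ qi ++ tl := by
          intro hq; apply hne; rw [List.cons_append]; exact congrArg _ hq
        obtain ⟨a, b, ha, hb, hab⟩ := ih (l.drop (m + 1))
          (by rw [List.length_drop]; omega)
          (hnd.sublist (List.drop_sublist (m+1) l))
          (i - (cartesian (l.take m)).inList.length - 1)
          (j - (cartesian (l.take m)).inList.length - 1)
          qi (qi ++ tl) hi' hj' ⟨tl, rfl⟩ hqine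
        rw [List.getElem?_drop] at ha hb
        rw [hLlen] at ha hb higt hjgt
        rw [show m + 1 + (i - m - 1) = i by omega] at ha
        rw [show m + 1 + (j - m - 1) = j by omega] at hb
        exact ⟨a, b, ha, hb, hab⟩

end Cartesian

lemma count_false_add_count_true (w : List Bool) :
    w.count false + w.count true = w.length := by
  induction w with
  | nil => simp
  | cons x w ih => cases x <;> simp [List.count_cons] <;> omega

lemma getD_append_lt (c u : List Bool) (i : ℕ) (h : i < c.length) (d : Bool) :
    (c ++ u).getD i d = c.getD i d := by
  rw [List.getD_eq_getElem?_getD, List.getD_eq_getElem?_getD,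
    List.getElem?_append, if_pos h]

lemma filter_range_length (c : List Bool) (b : Bool) :
    ((List.range c.length).filter (fun i => c.getD i (!b) = b)).length = c.count b := by
  induction c using List.reverseRecOn with
  | nil => simp
  | append_singleton c x ih =>
    rw [List.length_append, List.length_singleton, List.range_succ, List.filter_append]
    have h1 : (List.range c.length).filter (fun i => (c ++ [x]).getD i (!b) = b)
        = (List.range c.length).filter (fun i => c.getD i (!b) = b) :=
      List.filter_congr (fun i hi => by
        rw [getD_append_lt c [x] i (List.mem_range.mp hi)])
    have h2 : (c ++ [x]).getD c.length (!b) = x := by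
      rw [List.getD_eq_getElem?_getD, List.getElem?_append_right le_rfl]
      simp
    rw [h1, List.length_append, List.count_append, ih]
    congr 1
    rw [List.filter_cons, h2]
    by_cases hx : x = b
    · simp [hx]
    · simp [hx, List.count_cons, Ne.symm hx]

lemma filter_range_append (c u : List Bool) (b' b : Bool) :
    ∃ T : List ℕ, (∀ x ∈ T, c.length < x) ∧
      (List.range (c ++ b' :: u).length).filter (fun i => (c ++ b' :: u).getD i (!b) = b) =
      ((List.range c.length).filter (fun i => c.getD i (!b) = b)) ++
        (if b' = b then c.length :: T else T) := by
  classical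
  set w := c ++ b' :: u with hw
  have hlen : w.length = c.length + (u.length + 1) := by simp [hw]
  refine ⟨((List.range u.length).map (fun i => c.length + (i + 1))).filter
    (fun i => w.getD i (!b) = b), ?_, ?_⟩
  · intro x hx
    obtain ⟨i, _, rfl⟩ := List.mem_map.mp (List.mem_of_mem_filter hx)
    omega
  · rw [hlen, List.range_add, List.filter_append]
    congr 1
    · exact List.filter_congr (fun i hi => by
        rw [hw, getD_append_lt c (b' :: u) i (List.mem_range.mp hi)])
    · have hmap : List.map (fun x => c.length + x) (List.map Nat.succ (List.range u.length))
          = List.map (fun i => c.length + (i + 1)) (List.range u.length) := by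
        rw [List.map_map]; rfl
      rw [List.range_succ_eq_map, List.map_cons, hmap, List.filter_cons]
      have hmid : w.getD (c.length + 0) (!b) = b' := by
        rw [List.getD_eq_getElem?_getD, hw, List.getElem?_append_right (by omega)]
        simp
      rw [hmid]
      by_cases hb : b' = b
      · simp [hb]
      · simp [hb]

lemma nthIdx_first (c u : List Bool) (b : Bool) :
    nthIdx (c ++ b :: u) b (c.count b) = c.length := by
  obtain ⟨T, hT, he⟩ := filter_range_append c u b b
  rw [nthIdx, he, if_pos rfl]
  rw [List.getD_eq_getElem?_getD,
    List.getElem?_append_right (le_of_eq (filter_range_length c b))]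
  rw [filter_range_length c b]
  simp

lemma nthIdx_second (c u : List Bool) (b : Bool) :
    c.length < nthIdx (c ++ (!b) :: u) b (c.count b) := by
  obtain ⟨T, hT, he⟩ := filter_range_append c u (!b) b
  rw [nthIdx, he, if_neg (by simp)]
  rw [List.getD_eq_getElem?_getD,
    List.getElem?_append_right (le_of_eq (filter_range_length c b))]
  rw [filter_range_length c b]
  rw [Nat.sub_self]
  cases hT0 : T[0]? with
  | none => simp [List.length_append]
  | some x =>
    have := hT x (List.mem_of_getElem? hT0)
    simpa [hT0] using this

lemma exists_first_diff {w w' : List Bool} (hl : w.length = w'.length) (hne : w ≠ w') :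
    ∃ c a u u', w = c ++ a :: u ∧ w' = c ++ (!a) :: u' := by
  rcases bool_tri w w' with h | h | ⟨c, a, u, v, rfl, rfl⟩
  · exact absurd (h.eq_of_length hl) hne
  · exact absurd ((h.eq_of_length hl.symm).symm) hne
  · exact ⟨c, a, u, v, rfl, rfl⟩

lemma merge_diff {w w' : List Bool} (hl : w.length = w'.length)
    (hc : w.count true = w'.count true) (hne : w ≠ w') :
    ∃ k k', k < w.count false ∧ k' < w.count true ∧
      ((nthIdx w false k < nthIdx w true k' ∧ ¬ nthIdx w' false k < nthIdx w' true k') ∨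
       (¬ nthIdx w false k < nthIdx w true k' ∧ nthIdx w' false k < nthIdx w' true k')) := by
  have hcf : w.count false = w'.count false := by
    have := count_false_add_count_true w
    have := count_false_add_count_true w'
    omega
  obtain ⟨c, a, u, u', hw, hw'⟩ := exists_first_diff hl hne
  cases a with
  | false =>
    simp only [Bool.not_false] at hw'
    have e1 : w.count false = c.count false + (u.count false + 1) := by
      rw [hw, List.count_append]; simp [List.count_cons]
    have e2 : w'.count true = c.count true + (u'.count true + 1) := by
      rw [hw', List.count_append]; simp [List.count_cons]
    refine ⟨c.count false, c.count true, by omega, by omega, Or.inl ⟨?_, ?_⟩⟩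
    · have h1 := nthIdx_first c u false
      have h2 : c.length < nthIdx (c ++ false :: u) true (c.count true) := by
        simpa using nthIdx_second c u true
      rw [hw]; omega
    · have h1 := nthIdx_first c u' true
      have h2 : c.length < nthIdx (c ++ true :: u') false (c.count false) := by
        simpa using nthIdx_second c u' false
      rw [hw']; omega
  | true =>
    simp only [Bool.not_true] at hw'
    have e1 : w'.count false = c.count false + (u'.count false + 1) := by
      rw [hw', List.count_append]; simp [List.count_cons]
    have e2 : w.count true = c.count true + (u.count true + 1) := by
      rw [hw, List.count_append]; simp [List.count_cons]
    refine ⟨c.count false, c.count true, by omega, by omega, Or.inr ⟨?_, ?_⟩⟩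
    · have h1 := nthIdx_first c u true
      have h2 : c.length < nthIdx (c ++ true :: u) false (c.count false) := by
        simpa using nthIdx_second c u false
      rw [hw]
      omega
    · have h1 := nthIdx_first c u' false
      have h2 : c.length < nthIdx (c ++ false :: u') true (c.count true) := by
        simpa using nthIdx_second c u' true
      rw [hw']; omega

open BT in
lemma between_prefix {t : BT} {p u v pz : List Bool} {x y z : ℕ}
    (hx : t.inList[x]? = some (p ++ false :: u))
    (hy : t.inList[y]? = some (p ++ true :: v))
    (hz : t.inList[z]? = some pz) (hxz : x ≤ z) (hzy : z ≤ y) :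
    pz = p ∨ (∃ s, pz = p ++ false :: s) ∨ (∃ s, pz = p ++ true :: s) := by
  rcases bool_tri p pz with ⟨s, hs⟩ | ⟨s, hs⟩ | ⟨c, a, s1, s2, hp, hpz⟩
  · cases s with
    | nil => exact Or.inl (by rw [← hs]; simp)
    | cons b s =>
      cases b
      · exact Or.inr (Or.inl ⟨s, hs.symm⟩)
      · exact Or.inr (Or.inr ⟨s, hs.symm⟩)
  · -- pz ++ s = p
    cases s with
    | nil => exact Or.inl (by rw [← hs]; simp)
    | cons b s =>
      exfalso
      cases b
      · -- p = pz ++ false :: s ; y's path = pz ++ false :: (s ++ true :: v)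
        have hy' : t.inList[y]? = some (pz ++ false :: (s ++ true :: v)) := by
          rw [hy]; rw [← hs]; simp
        have hz' : t.inList[z]? = some (pz ++ []) := by simpa using hz
        have := lt_of_left_branch hy' hz' (Or.inl rfl)
        omega
      · -- p = pz ++ true :: s ; x's path = pz ++ true :: (s ++ false :: u)
        have hx' : t.inList[x]? = some (pz ++ true :: (s ++ false :: u)) := by
          rw [hx]; rw [← hs]; simp
        have := lt_of_right_branch hz hx'
        omega
  · exfalso
    cases a
    · -- p = c ++ false :: s1, pz = c ++ true :: s2
      simp only [Bool.not_false] at hpz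
      have hy' : t.inList[y]? = some (c ++ false :: (s1 ++ true :: v)) := by
        rw [hy, hp]; simp
      have hz' : t.inList[z]? = some (c ++ true :: s2) := by rw [hz, hpz]
      have := lt_of_left_branch hy' hz' (Or.inr ⟨s2, rfl⟩)
      omega
    · -- p = c ++ true :: s1, pz = c ++ false :: s2
      simp only [Bool.not_true] at hpz
      have hz' : t.inList[z]? = some (c ++ false :: s2) := by rw [hz, hpz]
      have hx' : t.inList[x]? = some (c ++ (true :: (s1 ++ false :: u))) := by
        rw [hx, hp]; simp
      have := lt_of_left_branch hz' hx' (Or.inr ⟨_, rfl⟩)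
      omega

open BT in
lemma refine_left {t lt rt : BT} {p s : List Bool} {k x z : ℕ}
    (hsub : t.subtree? p = some (.node lt rt))
    (hx : t.inList[x]? = some (p ++ false :: List.replicate k true))
    (hz : t.inList[z]? = some (p ++ false :: s)) (hxz : x ≤ z) :
    List.replicate k true <+: s := by
  have hsub' : t.subtree? (p ++ [false]) = some lt := by
    rw [subtree?_append, hsub]
    simp [subtree?]
  obtain ⟨δ, hδ⟩ := loc (p ++ [false]) hsub'
  have hx2 : t.inList[x]? = some ((p ++ [false]) ++ List.replicate k true) := by
    rw [List.append_assoc]; exact hx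
  have hz2 : t.inList[z]? = some ((p ++ [false]) ++ s) := by
    rw [List.append_assoc]; exact hz
  obtain ⟨x', rfl, hx'⟩ := (hδ _ _).mp hx2
  obtain ⟨z', rfl, hz'⟩ := (hδ _ _).mp hz2
  exact spine_right k hx' hz' (by omega)

open BT in
lemma refine_right {t lt rt : BT} {p s : List Bool} {k' y z : ℕ}
    (hsub : t.subtree? p = some (.node lt rt))
    (hy : t.inList[y]? = some (p ++ true :: List.replicate k' false))
    (hz : t.inList[z]? = some (p ++ true :: s)) (hzy : z ≤ y) :
    List.replicate k' false <+: s := by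
  have hsub' : t.subtree? (p ++ [true]) = some rt := by
    rw [subtree?_append, hsub]
    simp [subtree?]
  obtain ⟨δ, hδ⟩ := loc (p ++ [true]) hsub'
  have hy2 : t.inList[y]? = some ((p ++ [true]) ++ List.replicate k' false) := by
    rw [List.append_assoc]; exact hy
  have hz2 : t.inList[z]? = some ((p ++ [true]) ++ s) := by
    rw [List.append_assoc]; exact hz
  obtain ⟨y', rfl, hy'⟩ := (hδ _ _).mp hy2
  obtain ⟨z', rfl, hz'⟩ := (hδ _ _).mp hz2
  exact spine_left k' hy' hz' (by omega)

lemma value_le {α : Type*} [LinearOrder α] {n : ℕ} {A : Fin n → α}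
    (hA : Function.Injective A) {t : BT} (ht : cartesian (List.ofFn A) = t)
    {i j : Fin n} {pi pj : List Bool}
    (hi : t.inList[(i : ℕ)]? = some pi) (hj : t.inList[(j : ℕ)]? = some pj)
    (hpre : pi <+: pj) : A i ≤ A j := by
  subst ht
  by_cases he : pi = pj
  · subst he
    have hlen : (cartesian (List.ofFn A)).inList.length = n := by
      rw [length_inList_cartesian, List.length_ofFn]
    have : (i : ℕ) = (j : ℕ) :=
      (List.getElem?_inj (by rw [hlen]; exact i.isLt) (BT.nodup_inList _)).mp
        (hi.trans hj.symm)
    exact le_of_eq (congrArg A (Fin.ext this))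
  · obtain ⟨a, b, ha, hb, hab⟩ := cartesian_strict (List.ofFn A).length _ le_rfl
      (List.nodup_ofFn.mpr hA) _ _ _ _ hi hj hpre he
    have ha' : (List.ofFn A)[(i : ℕ)]? = some (A i) := by
      rw [List.getElem?_ofFn]
      simp [List.ofFnNthVal, i.isLt]
    have hb' : (List.ofFn A)[(j : ℕ)]? = some (A j) := by
      rw [List.getElem?_ofFn]
      simp [List.ofFnNthVal, j.isLt]
    rw [ha'] at ha
    rw [hb'] at hb
    obtain rfl : A i = a := Option.some_injective _ ha
    obtain rfl : A j = b := Option.some_injective _ hb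
    exact le_of_lt hab

lemma idx_eq_of_inList {n : ℕ} {t : BT} (hlen : t.inList.length = n)
    {i j : Fin n} {q : List Bool}
    (hi : t.inList[(i : ℕ)]? = some q) (hj : t.inList[(j : ℕ)]? = some q) : i = j :=
  Fin.ext ((List.getElem?_inj (by rw [hlen]; exact i.isLt) (BT.nodup_inList _)).mp
    (hi.trans hj.symm))

open BT in
lemma second_min_at {α : Type*} [LinearOrder α] {n : ℕ} {A : Fin n → α}
    (hA : Function.Injective A) {t : BT} {M : List Bool → List Bool}
    (hR : realizes A t M) {p : List Bool} {l r : BT}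
    (hsub : t.subtree? p = some (.node l r)) (hl : l ≠ .leaf) (hr : r ≠ .leaf)
    {k k' : ℕ} (hk : k < l.Rspine) (hk' : k' < r.Lspine)
    {x y m : Fin n}
    (hx : t.inList[(x : ℕ)]? = some (p ++ false :: List.replicate k true))
    (hy : t.inList[(y : ℕ)]? = some (p ++ true :: List.replicate k' false))
    (hm : t.inList[(m : ℕ)]? = some p)
    (hord : nthIdx (M p) false k < nthIdx (M p) true k') :
    x < y ∧ isSecondMin A x y x := by
  have hlen : t.inList.length = n := by
    rw [BT.length_inList, ← hR.1, size_cartesian (List.ofFn A).length _ le_rfl,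
      List.length_ofFn]
  have hm0 : t.inList[(m : ℕ)]? = some (p ++ []) := by simpa using hm
  have hxm : (x : ℕ) < m := lt_of_left_branch hx hm0 (Or.inl rfl)
  have hmy : (m : ℕ) < y := lt_of_right_branch hm hy
  have hxy : (x : ℕ) < y := lt_of_left_branch hx hy (Or.inr ⟨_, rfl⟩)
  have hAxy : A x < A y := (hR.2 p l r hsub hl hr k k' hk hk' x y hx hy).mpr hord
  have key : ∀ z : Fin n, x ≤ z → z ≤ y → (A m ≤ A z ∧ (z ≠ m → A x ≤ A z)) := by
    intro z hxz hzy
    have hxz' : (x : ℕ) ≤ (z : ℕ) := hxz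
    have hzy' : (z : ℕ) ≤ (y : ℕ) := hzy
    have hzlt : (z : ℕ) < t.inList.length := by rw [hlen]; exact z.isLt
    obtain ⟨pz, hz⟩ : ∃ pz, t.inList[(z : ℕ)]? = some pz :=
      ⟨_, List.getElem?_eq_getElem hzlt⟩
    rcases between_prefix hx hy hz hxz' hzy' with rfl | ⟨s, rfl⟩ | ⟨s, rfl⟩
    · have hzm : z = m := idx_eq_of_inList hlen hz hm
      exact ⟨le_of_eq (congrArg A hzm.symm), fun hne => absurd hzm hne⟩
    · constructor
      · exact value_le hA hR.1 hm hz ⟨false :: s, rfl⟩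
      · intro _
        have hpre := refine_left hsub hx hz hxz'
        have hpre2 : (p ++ false :: List.replicate k true) <+: (p ++ false :: s) :=
          (List.prefix_append_right_inj p).mpr (List.cons_prefix_cons.mpr ⟨rfl, hpre⟩)
        exact value_le hA hR.1 hx hz hpre2
    · constructor
      · exact value_le hA hR.1 hm hz ⟨true :: s, rfl⟩
      · intro _
        have hpre := refine_right hsub hy hz hzy'
        have hpre2 : (p ++ true :: List.replicate k' false) <+: (p ++ true :: s) :=
          (List.prefix_append_right_inj p).mpr (List.cons_prefix_cons.mpr ⟨rfl, hpre⟩)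
        exact le_trans hAxy.le (value_le hA hR.1 hy hz hpre2)
  refine ⟨hxy, le_refl x, le_of_lt hxy, m,
    ⟨le_of_lt hxm, le_of_lt hmy, fun z hxz hzy => (key z hxz hzy).1⟩,
    fun h => absurd (congrArg Fin.val h) (Nat.ne_of_lt hxm),
    fun z hxz hzy hzm => (key z hxz hzy).2 hzm⟩

open BT in
lemma second_min_at' {α : Type*} [LinearOrder α] {n : ℕ} {A : Fin n → α}
    (hA : Function.Injective A) {t : BT} {M : List Bool → List Bool}
    (hR : realizes A t M) {p : List Bool} {l r : BT}
    (hsub : t.subtree? p = some (.node l r)) (hl : l ≠ .leaf) (hr : r ≠ .leaf)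
    {k k' : ℕ} (hk : k < l.Rspine) (hk' : k' < r.Lspine)
    {x y m : Fin n}
    (hx : t.inList[(x : ℕ)]? = some (p ++ false :: List.replicate k true))
    (hy : t.inList[(y : ℕ)]? = some (p ++ true :: List.replicate k' false))
    (hm : t.inList[(m : ℕ)]? = some p)
    (hord : ¬ nthIdx (M p) false k < nthIdx (M p) true k') :
    x < y ∧ isSecondMin A x y y := by
  have hlen : t.inList.length = n := by
    rw [BT.length_inList, ← hR.1, size_cartesian (List.ofFn A).length _ le_rfl,
      List.length_ofFn]
  have hm0 : t.inList[(m : ℕ)]? = some (p ++ []) := by simpa using hm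
  have hxm : (x : ℕ) < m := lt_of_left_branch hx hm0 (Or.inl rfl)
  have hmy : (m : ℕ) < y := lt_of_right_branch hm hy
  have hxy : (x : ℕ) < y := lt_of_left_branch hx hy (Or.inr ⟨_, rfl⟩)
  have hnlt : ¬ A x < A y := fun h => hord ((hR.2 p l r hsub hl hr k k' hk hk' x y hx hy).mp h)
  have hAyx : A y < A x := by
    rcases lt_trichotomy (A y) (A x) with h | h | h
    · exact h
    · exact absurd (Fin.ext (show (y : ℕ) = x from congrArg Fin.val (hA h))) (by omega)
    · exact absurd h hnlt
  have key : ∀ z : Fin n, x ≤ z → z ≤ y → (A m ≤ A z ∧ (z ≠ m → A y ≤ A z)) := by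
    intro z hxz hzy
    have hxz' : (x : ℕ) ≤ (z : ℕ) := hxz
    have hzy' : (z : ℕ) ≤ (y : ℕ) := hzy
    have hzlt : (z : ℕ) < t.inList.length := by rw [hlen]; exact z.isLt
    obtain ⟨pz, hz⟩ : ∃ pz, t.inList[(z : ℕ)]? = some pz :=
      ⟨_, List.getElem?_eq_getElem hzlt⟩
    rcases between_prefix hx hy hz hxz' hzy' with rfl | ⟨s, rfl⟩ | ⟨s, rfl⟩
    · have hzm : z = m := idx_eq_of_inList hlen hz hm
      exact ⟨le_of_eq (congrArg A hzm.symm), fun hne => absurd hzm hne⟩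
    · constructor
      · exact value_le hA hR.1 hm hz ⟨false :: s, rfl⟩
      · intro _
        have hpre := refine_left hsub hx hz hxz'
        have hpre2 : (p ++ false :: List.replicate k true) <+: (p ++ false :: s) :=
          (List.prefix_append_right_inj p).mpr (List.cons_prefix_cons.mpr ⟨rfl, hpre⟩)
        exact le_trans hAyx.le (value_le hA hR.1 hx hz hpre2)
    · constructor
      · exact value_le hA hR.1 hm hz ⟨true :: s, rfl⟩
      · intro _
        have hpre := refine_right hsub hy hz hzy'
        have hpre2 : (p ++ true :: List.replicate k' false) <+: (p ++ true :: s) :=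
          (List.prefix_append_right_inj p).mpr (List.cons_prefix_cons.mpr ⟨rfl, hpre⟩)
        exact value_le hA hR.1 hy hz hpre2
  refine ⟨hxy, le_of_lt hxy, le_refl y, m,
    ⟨le_of_lt hxm, le_of_lt hmy, fun z hxz hzy => (key z hxz hzy).1⟩,
    fun h => absurd (congrArg Fin.val h) ((Nat.ne_of_lt hmy).symm),
    fun z hxz hzy hzm => (key z hxz hzy).2 hzm⟩

/-- Distinct extended Cartesian trees are distinguished by some range top-2 query:
if two arrays realize extended Cartesian trees with the same topology `t` but with
different merge orders at some node, then some second-minimum answer differs. -/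
theorem stmt15 {α : Type*} [LinearOrder α] {n : ℕ} (A A' : Fin n → α)
    (hA : Function.Injective A) (hA' : Function.Injective A')
    (t : BT) (M M' : List Bool → List Bool)
    (hM : validMerge t M) (hM' : validMerge t M')
    (hR : realizes A t M) (hR' : realizes A' t M')
    (hdiff : ∃ p l r, t.subtree? p = some (.node l r) ∧
        l ≠ .leaf ∧ r ≠ .leaf ∧ M p ≠ M' p) :
    ∃ i j k k' : Fin n, i < j ∧
      isSecondMin A i j k ∧ isSecondMin A' i j k' ∧ k ≠ k' := by
  obtain ⟨p, l, r, hsub, hl, hr, hMne⟩ := hdiff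
  obtain ⟨hlenM, hcntM⟩ := hM p l r hsub hl hr
  obtain ⟨hlenM', hcntM'⟩ := hM' p l r hsub hl hr
  have hleq : (M p).length = (M' p).length := by rw [hlenM, hlenM']
  have hceq : (M p).count true = (M' p).count true := by rw [hcntM, hcntM']
  obtain ⟨k, k', hk, hk', hcase⟩ := merge_diff hleq hceq hMne
  have hsum := count_false_add_count_true (M p)
  have hkR : k < l.Rspine := by omega
  have hk'L : k' < r.Lspine := by omega
  have hlen : t.inList.length = n := by
    rw [BT.length_inList, ← hR.1, size_cartesian (List.ofFn A).length _ le_rfl,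
      List.length_ofFn]
  -- the node x on the left inner spine
  obtain ⟨a1, b1, hsx⟩ := BT.subtree?_replicate_true (t := l) hkR
  have hsubx : t.subtree? (p ++ false :: List.replicate k true) = some (.node a1 b1) := by
    rw [BT.subtree?_append, hsub]
    simpa [BT.subtree?] using hsx
  have hmemx := BT.mem_inList_of_subtree? hsubx
  obtain ⟨xi, hxidx⟩ := List.getElem?_of_mem hmemx
  have hxlt : xi < n := by
    rw [← hlen]; exact (List.getElem?_eq_some_iff.mp hxidx).1
  -- the node y on the right inner spine
  obtain ⟨a2, b2, hsy⟩ := BT.subtree?_replicate_false (t := r) hk'L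
  have hsuby : t.subtree? (p ++ true :: List.replicate k' false) = some (.node a2 b2) := by
    rw [BT.subtree?_append, hsub]
    simpa [BT.subtree?] using hsy
  have hmemy := BT.mem_inList_of_subtree? hsuby
  obtain ⟨yi, hyidx⟩ := List.getElem?_of_mem hmemy
  have hylt : yi < n := by
    rw [← hlen]; exact (List.getElem?_eq_some_iff.mp hyidx).1
  -- the node m at p
  have hmemm := BT.mem_inList_of_subtree? hsub
  obtain ⟨mi, hmidx⟩ := List.getElem?_of_mem hmemm
  have hmlt : mi < n := by
    rw [← hlen]; exact (List.getElem?_eq_some_iff.mp hmidx).1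
  set x : Fin n := ⟨xi, hxlt⟩ with hxdef
  set y : Fin n := ⟨yi, hylt⟩ with hydef
  set m : Fin n := ⟨mi, hmlt⟩ with hmdef
  have hx : t.inList[(x : ℕ)]? = some (p ++ false :: List.replicate k true) := hxidx
  have hy : t.inList[(y : ℕ)]? = some (p ++ true :: List.replicate k' false) := hyidx
  have hm : t.inList[(m : ℕ)]? = some p := hmidx
  rcases hcase with ⟨h1, h2⟩ | ⟨h1, h2⟩
  · obtain ⟨hxy, hsm⟩ := second_min_at hA hR hsub hl hr hkR hk'L hx hy hm h1
    obtain ⟨_, hsm'⟩ := second_min_at' hA' hR' hsub hl hr hkR hk'L hx hy hm h2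
    exact ⟨x, y, x, y, hxy, hsm, hsm',
      fun h => absurd (congrArg Fin.val h) (Nat.ne_of_lt hxy)⟩
  · obtain ⟨hxy, hsm⟩ := second_min_at' hA hR hsub hl hr hkR hk'L hx hy hm h1
    obtain ⟨_, hsm'⟩ := second_min_at hA' hR' hsub hl hr hkR hk'L hx hy hm h2
    exact ⟨x, y, y, x, hxy, hsm, hsm',
      fun h => absurd (congrArg Fin.val h) ((Nat.ne_of_lt hxy).symm)⟩
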